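/- Let c be a child sequence of length n with cyclic permutation σ making σ(c) a tree sequence, and let σ* be the cyclic permutation of [n] sending 1 to 1 + ⌊n/2⌋. If max_{0 ≤ i ≤ n} S_i(σ(c)) = m, then either max_{0 ≤ i ≤ ⌊n/2⌋} |S_i(c)| ≥ m/4 or max_{0 ≤ i ≤ ⌈n/2⌉} |S_i(σ*(c))| ≥ m/4. -/

import Mathlib

/-- Partial sum `S_k = ∑_{i=1}^k (c_i - 1)` of a length-`n` sequence (0-indexed). -/
def pS {n : ℕ} (c : Fin n → ℕ) (k : ℕ) : ℤ :=
  ∑ i : Fin n, if (i : ℕ) < k then (c i : ℤ) - 1 else 0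

/-- Cyclic shift of a sequence by `j`. -/
def cshift {n : ℕ} (j : Fin n) (c : Fin n → ℕ) : Fin n → ℕ := fun i => c (i + j)

/-- A tree sequence: partial sums are nonnegative before index `n`
(equivalently, the queue `S_i + 1` stays strictly positive for `i < n`). -/
def IsTreeSeq {n : ℕ} (c : Fin n → ℕ) : Prop := ∀ k < n, 0 ≤ pS c k

lemma pS_zero {n : ℕ} (c : Fin n → ℕ) : pS c 0 = 0 := by simp [pS]

lemma pS_last {n : ℕ} (hn : 0 < n) (c : Fin n → ℕ) (hc : ∑ i, c i = n - 1) :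
    pS c n = -1 := by
  unfold pS
  rw [Finset.sum_congr rfl (fun i _ => if_pos i.isLt), Finset.sum_sub_distrib]
  rw [Finset.sum_const, ← Nat.cast_sum, hc]
  simp
  omega

lemma fin_val_add {n : ℕ} (i j : Fin n) :
    ((i + j : Fin n) : ℕ) = if (i:ℕ) + j < n then (i:ℕ) + j else (i:ℕ) + j - n := by
  rw [Fin.val_add]
  split
  · exact Nat.mod_eq_of_lt (by assumption)
  · rw [Nat.mod_eq_sub_mod (by omega)]
    have := i.isLt; have := j.isLt
    exact Nat.mod_eq_of_lt (by omega)

lemma pS_shift {n : ℕ} (c : Fin n → ℕ) (j : Fin n) (k : ℕ) (hk : (j:ℕ) + k ≤ n) :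
    pS (cshift j c) k = pS c ((j:ℕ) + k) - pS c j := by
  haveI : NeZero n := ⟨by have := j.isLt; omega⟩
  unfold pS cshift
  rw [← Finset.sum_sub_distrib]
  refine Fintype.sum_equiv (Equiv.addRight j) _ _ (fun i => ?_)
  simp only [Equiv.coe_addRight]
  have h := fin_val_add i j
  have hi := i.isLt
  have hjn := j.isLt
  by_cases hlt : (i:ℕ) + j < n
  · rw [if_pos hlt] at h; simp only [h]; split_ifs <;> omega
  · rw [if_neg hlt] at h; simp only [h]; split_ifs <;> omega

lemma pS_shift_wrap {n : ℕ} (c : Fin n → ℕ) (j : Fin n) (k : ℕ) (hk : k ≤ n)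
    (hw : n < (j:ℕ) + k) :
    pS (cshift j c) k = pS c ((j:ℕ) + k - n) - pS c j + pS c n := by
  haveI : NeZero n := ⟨by have := j.isLt; omega⟩
  unfold pS cshift
  rw [← Finset.sum_sub_distrib, ← Finset.sum_add_distrib]
  refine Fintype.sum_equiv (Equiv.addRight j) _ _ (fun i => ?_)
  simp only [Equiv.coe_addRight]
  have h := fin_val_add i j
  have hi := i.isLt
  have hjn := j.isLt
  by_cases hlt : (i:ℕ) + j < n
  · rw [if_pos hlt] at h; simp only [h]; split_ifs <;> omega
  · rw [if_neg hlt] at h; simp only [h]; split_ifs <;> omega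


/-- If the maximum of the partial sums of the tree-sequence cyclic shift of a
child sequence `c` is `m`, then either the partial sums of `c` up to `⌊n/2⌋`
reach absolute value `m/4`, or the partial sums up to `⌈n/2⌉` of the cyclic
shift of `c` by `⌊n/2⌋` (sending `1` to `1 + ⌊n/2⌋`) do. -/
theorem stmt2 {n : ℕ} (hn : 0 < n) (c : Fin n → ℕ) (hc : ∑ i, c i = n - 1)
    (j : Fin n) (hj : IsTreeSeq (cshift j c)) (m : ℤ)
    (hm : IsGreatest {s : ℤ | ∃ i ≤ n, pS (cshift j c) i = s} m) :
    (∃ i ≤ n / 2, (m : ℝ) / 4 ≤ |(pS c i : ℝ)|) ∨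
      (∃ i ≤ (n + 1) / 2,
        (m : ℝ) / 4 ≤ |(pS (cshift ⟨n / 2, Nat.div_lt_self hn one_lt_two⟩ c) i : ℝ)|) := by
  have hm0 : 0 ≤ m := hm.2 ⟨0, Nat.zero_le n, pS_zero _⟩
  rcases eq_or_lt_of_le hm0 with hm1 | hm1
  · exact Or.inl ⟨0, Nat.zero_le _, by rw [pS_zero]; simp [← hm1]⟩
  · by_contra hcon
    push_neg at hcon
    obtain ⟨h1, h2⟩ := hcon
    have hmR : (0:ℝ) < (m:ℝ) := by exact_mod_cast hm1
    have key : ∀ p ≤ n, |(pS c p : ℝ)| < (m:ℝ) / 2 := by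
      intro p hp
      rcases le_or_gt p (n / 2) with hph | hph
      · have := h1 p hph; linarith
      · have hi : p - n/2 ≤ (n+1)/2 := by omega
        have hB := h2 (p - n/2) hi
        have heq : pS (cshift ⟨n / 2, Nat.div_lt_self hn one_lt_two⟩ c) (p - n/2)
            = pS c p - pS c (n/2) := by
          have h3 := pS_shift c ⟨n / 2, Nat.div_lt_self hn one_lt_two⟩ (p - n/2)
            (by simp; omega)
          rwa [show ((⟨n / 2, Nat.div_lt_self hn one_lt_two⟩ : Fin n):ℕ) + (p - n/2) = p
            by simp; omega] at h3
        rw [heq] at hB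
        have hH := h1 (n/2) le_rfl
        push_cast at hB
        rw [abs_lt] at hB hH ⊢
        constructor <;> [linarith; linarith]
    obtain ⟨k, hk, hkm⟩ := hm.1
    rcases le_or_gt ((j:ℕ) + k) n with hw | hw
    · have heq := pS_shift c j k hw
      rw [hkm] at heq
      have A := key ((j:ℕ)+k) hw
      have B := key j j.isLt.le
      have heqR : (m:ℝ) = (pS c ((j:ℕ)+k) : ℝ) - (pS c (j:ℕ) : ℝ) := by
        exact_mod_cast congrArg (Int.cast : ℤ → ℝ) heq
      rw [abs_lt] at A B
      linarith
    · have heq := pS_shift_wrap c j k hk hw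
      rw [hkm, pS_last hn c hc] at heq
      have A := key ((j:ℕ)+k-n) (by omega)
      have B := key j j.isLt.le
      have heqR : (m:ℝ) = (pS c ((j:ℕ)+k-n) : ℝ) - (pS c (j:ℕ) : ℝ) + (-1) := by
        exact_mod_cast congrArg (Int.cast : ℤ → ℝ) heq
      rw [abs_lt] at A B
      linarith
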